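/- arXiv:1710.09316 — 2 statements merged into one kernel-verified Lean document; each statement's English description precedes it below -/
import Mathlib

section
/- Let p be a prime and let X_1, …, X_N be finite sets of integers none of whose elements is divisible by p, and let k_1 < k_2 < … < k_N be distinct nonnegative integers. Set Y := ⋃_{i=1}^N p^{k_i} X_i. Then E(Y)^{1/2} ≤ 6 · Σ_{i=1}^N E(X_i)^{1/2}. -/
/-- Additive energy of a finite set of integers. -/
def addEnergy (A : Finset ℤ) : ℕ :=
  ((A ×ˢ A ×ˢ A ×ˢ A).filter (fun x => x.1 + x.2.1 = x.2.2.1 + x.2.2.2)).card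

namespace OPS



def cnt (f : ℤ → ℤ → ℤ) (A B C D : Finset ℤ) : ℕ :=
  (((A ×ˢ B) ×ˢ (C ×ˢ D)).filter fun x => f x.1.1 x.1.2 = f x.2.1 x.2.2).card

def rep (f : ℤ → ℤ → ℤ) (A B : Finset ℤ) (s : ℤ) : ℕ :=
  ((A ×ˢ B).filter fun x => f x.1 x.2 = s).card

lemma rep_eq_zero {f : ℤ → ℤ → ℤ} {A B : Finset ℤ} {s : ℤ}
    (h : s ∉ (A ×ˢ B).image fun x => f x.1 x.2) : rep f A B s = 0 := by
  rw [rep, Finset.card_eq_zero, Finset.filter_eq_empty_iff]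
  intro x hx hfx
  exact h (Finset.mem_image.2 ⟨x, hx, hfx⟩)

lemma cnt_eq_sum (f : ℤ → ℤ → ℤ) (A B C D : Finset ℤ) :
    cnt f A B C D = ∑ s ∈ (A ×ˢ B).image (fun x => f x.1 x.2), rep f A B s * rep f C D s := by
  rw [cnt, Finset.card_eq_sum_card_fiberwise
    (f := fun x : (ℤ × ℤ) × ℤ × ℤ => f x.1.1 x.1.2)
    (t := (A ×ˢ B).image (fun x => f x.1 x.2))]
  · refine Finset.sum_congr rfl fun s _ => ?_
    rw [Finset.filter_filter]
    rw [show (((A ×ˢ B) ×ˢ (C ×ˢ D)).filter fun x => (f x.1.1 x.1.2 = f x.2.1 x.2.2) ∧ f x.1.1 x.1.2 = s)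
        = ((A ×ˢ B).filter fun x => f x.1 x.2 = s) ×ˢ ((C ×ˢ D).filter fun x => f x.1 x.2 = s) from ?_]
    · rw [Finset.card_product, rep, rep]
    · ext ⟨x, y⟩
      simp only [Finset.mem_filter, Finset.mem_product]
      constructor
      · rintro ⟨⟨h1, h2⟩, h3, h4⟩
        exact ⟨⟨h1, h4⟩, h2, h3 ▸ h4⟩
      · rintro ⟨⟨h1, h4⟩, h2, h5⟩
        exact ⟨⟨h1, h2⟩, h4.trans h5.symm, h4⟩
  · intro x hx
    rw [Finset.mem_coe, Finset.mem_filter, Finset.mem_product] at hx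
    exact Finset.mem_coe.2 (Finset.mem_image.2 ⟨x.1, hx.1.1, rfl⟩)

lemma sum_rep_sq_le (f : ℤ → ℤ → ℤ) (C D : Finset ℤ) (T : Finset ℤ) :
    ∑ s ∈ T, rep f C D s * rep f C D s ≤ cnt f C D C D := by
  rw [cnt_eq_sum]
  calc ∑ s ∈ T, rep f C D s * rep f C D s
      ≤ ∑ s ∈ T ∪ (C ×ˢ D).image (fun x => f x.1 x.2), rep f C D s * rep f C D s :=
        Finset.sum_le_sum_of_subset Finset.subset_union_left
    _ = ∑ s ∈ (C ×ˢ D).image (fun x => f x.1 x.2), rep f C D s * rep f C D s := by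
        refine (Finset.sum_subset Finset.subset_union_right ?_).symm
        intro x _ hx
        rw [rep_eq_zero hx]; simp

lemma cnt_sq_le (f : ℤ → ℤ → ℤ) (A B C D : Finset ℤ) :
    cnt f A B C D ^ 2 ≤ cnt f A B A B * cnt f C D C D := by
  rw [cnt_eq_sum f A B C D]
  calc (∑ s ∈ (A ×ˢ B).image (fun x => f x.1 x.2), rep f A B s * rep f C D s) ^ 2
      ≤ (∑ s ∈ (A ×ˢ B).image (fun x => f x.1 x.2), rep f A B s ^ 2) *
        (∑ s ∈ (A ×ˢ B).image (fun x => f x.1 x.2), rep f C D s ^ 2) :=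
        Finset.sum_mul_sq_le_sq_mul_sq _ _ _
    _ ≤ cnt f A B A B * cnt f C D C D := by
        refine Nat.mul_le_mul ?_ ?_
        · simp_rw [sq]
          rw [cnt_eq_sum]
        · simp_rw [sq]
          exact sum_rep_sq_le f C D _

lemma addEnergy_eq_cnt_add (A : Finset ℤ) : _root_.addEnergy A = cnt (· + ·) A A A A := by
  rw [_root_.addEnergy, cnt]
  apply Finset.card_equiv ⟨fun x => ((x.1, x.2.1), x.2.2.1, x.2.2.2),
    fun x => (x.1.1, x.1.2, x.2.1, x.2.2), fun ⟨a,b,c,d⟩ => rfl, fun ⟨⟨a,b⟩,c,d⟩ => rfl⟩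
  rintro ⟨a, b, c, d⟩
  simp only [Finset.mem_filter, Finset.mem_product, Equiv.coe_fn_mk]
  tauto

lemma addEnergy_eq_cnt_sub (A : Finset ℤ) : _root_.addEnergy A = cnt (· - ·) A A A A := by
  rw [_root_.addEnergy, cnt]
  apply Finset.card_equiv ⟨fun x => ((x.1, x.2.2.1), x.2.2.2, x.2.1),
    fun x => (x.1.1, x.2.2, x.1.2, x.2.1), fun ⟨a,b,c,d⟩ => rfl, fun ⟨⟨a,b⟩,c,d⟩ => rfl⟩
  rintro ⟨a, b, c, d⟩
  simp only [Finset.mem_filter, Finset.mem_product, Equiv.coe_fn_mk]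
  constructor
  · rintro ⟨⟨h1, h2, h3, h4⟩, h5⟩
    exact ⟨⟨⟨h1, h3⟩, h4, h2⟩, by omega⟩
  · rintro ⟨⟨⟨h1, h3⟩, h4, h2⟩, h5⟩
    exact ⟨⟨h1, h2, h3, h4⟩, by omega⟩



lemma sub_key {p : ℕ} (hp : p.Prime) {a b c d : ℤ} {ka : ℕ} {xa : ℤ}
    (ha : a = (p:ℤ)^ka * xa) (hxa : ¬(p:ℤ) ∣ xa)
    (hb : (p:ℤ)^(ka+1) ∣ b) (hc : (p:ℤ)^(ka+1) ∣ c) (hd : (p:ℤ)^(ka+1) ∣ d)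
    (heq : a + b = c + d) : False := by
  have hda : (p:ℤ)^(ka+1) ∣ a := by
    have : a = c + d - b := by omega
    rw [this]
    exact dvd_sub (dvd_add hc hd) hb
  rw [ha, pow_succ] at hda
  have hpne : ((p:ℤ))^ka ≠ 0 := pow_ne_zero _ (by exact_mod_cast hp.ne_zero)
  exact hxa ((mul_dvd_mul_iff_left hpne).1 hda)

lemma dvd_slice {p : ℕ} {y x : ℤ} {e m : ℕ} (hy : y = (p:ℤ)^e * x) (h : m ≤ e) :
    (p:ℤ)^m ∣ y := hy ▸ dvd_mul_of_dvd_left (pow_dvd_pow _ h) _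

lemma key4 {p : ℕ} (hp : p.Prime) {y1 y2 y3 y4 x1 x2 x3 x4 : ℤ} {e1 e2 e3 e4 : ℕ}
    (h1 : y1 = (p:ℤ)^e1 * x1) (hx1 : ¬(p:ℤ) ∣ x1)
    (h2 : y2 = (p:ℤ)^e2 * x2) (hx2 : ¬(p:ℤ) ∣ x2)
    (h3 : y3 = (p:ℤ)^e3 * x3) (hx3 : ¬(p:ℤ) ∣ x3)
    (h4 : y4 = (p:ℤ)^e4 * x4) (hx4 : ¬(p:ℤ) ∣ x4)
    (heq : y1 + y2 = y3 + y4)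
    (hne : e1 ≠ e2 ∧ e1 ≠ e3 ∧ e1 ≠ e4 ∧ e2 ≠ e3 ∧ e2 ≠ e4 ∧ e3 ≠ e4) : False := by
  have hcases : (e1 + 1 ≤ e2 ∧ e1 + 1 ≤ e3 ∧ e1 + 1 ≤ e4) ∨
      (e2 + 1 ≤ e1 ∧ e2 + 1 ≤ e3 ∧ e2 + 1 ≤ e4) ∨
      (e3 + 1 ≤ e1 ∧ e3 + 1 ≤ e2 ∧ e3 + 1 ≤ e4) ∨
      (e4 + 1 ≤ e1 ∧ e4 + 1 ≤ e2 ∧ e4 + 1 ≤ e3) := by omega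
  rcases hcases with ⟨ha, hb, hc⟩ | ⟨ha, hb, hc⟩ | ⟨ha, hb, hc⟩ | ⟨ha, hb, hc⟩
  · exact sub_key hp h1 hx1 (dvd_slice h2 ha) (dvd_slice h3 hb) (dvd_slice h4 hc) heq
  · exact sub_key hp h2 hx2 (dvd_slice h1 ha) (dvd_slice h3 hb) (dvd_slice h4 hc)
      (by omega : y2 + y1 = y3 + y4)
  · exact sub_key hp h3 hx3 (dvd_slice h4 hc) (dvd_slice h1 ha) (dvd_slice h2 hb)
      (by omega : y3 + y4 = y1 + y2)
  · exact sub_key hp h4 hx4 (dvd_slice h3 hc) (dvd_slice h1 ha) (dvd_slice h2 hb)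
      (by omega : y4 + y3 = y1 + y2)

lemma card_case12 (W Z : Finset ℤ) :
    ((W ×ˢ W ×ˢ Z ×ˢ Z).filter fun x => x.1 + x.2.1 = x.2.2.1 + x.2.2.2).card
      = cnt (· + ·) W W Z Z := by
  rw [cnt]
  apply Finset.card_equiv ⟨fun x => ((x.1, x.2.1), x.2.2.1, x.2.2.2),
    fun x => (x.1.1, x.1.2, x.2.1, x.2.2), fun ⟨a,b,c,d⟩ => rfl, fun ⟨⟨a,b⟩,c,d⟩ => rfl⟩
  rintro ⟨a, b, c, d⟩
  simp only [Finset.mem_filter, Finset.mem_product, Equiv.coe_fn_mk]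
  tauto

lemma card_case34 (W Z : Finset ℤ) :
    ((Z ×ˢ Z ×ˢ W ×ˢ W).filter fun x => x.1 + x.2.1 = x.2.2.1 + x.2.2.2).card
      = cnt (· + ·) W W Z Z := by
  rw [cnt]
  apply Finset.card_equiv ⟨fun x => ((x.2.2.1, x.2.2.2), x.1, x.2.1),
    fun x => (x.2.1, x.2.2, x.1.1, x.1.2), fun ⟨a,b,c,d⟩ => rfl, fun ⟨⟨a,b⟩,c,d⟩ => rfl⟩
  rintro ⟨a, b, c, d⟩
  simp only [Finset.mem_filter, Finset.mem_product, Equiv.coe_fn_mk]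
  constructor
  · rintro ⟨⟨h1, h2, h3, h4⟩, h5⟩
    exact ⟨⟨⟨h3, h4⟩, h1, h2⟩, by omega⟩
  · rintro ⟨⟨⟨h3, h4⟩, h1, h2⟩, h5⟩
    exact ⟨⟨h1, h2, h3, h4⟩, by omega⟩

lemma card_case13 (W Z : Finset ℤ) :
    ((W ×ˢ Z ×ˢ W ×ˢ Z).filter fun x => x.1 + x.2.1 = x.2.2.1 + x.2.2.2).card
      = cnt (· - ·) W W Z Z := by
  rw [cnt]
  apply Finset.card_equiv ⟨fun x => ((x.1, x.2.2.1), x.2.2.2, x.2.1),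
    fun x => (x.1.1, x.2.2, x.1.2, x.2.1), fun ⟨a,b,c,d⟩ => rfl, fun ⟨⟨a,b⟩,c,d⟩ => rfl⟩
  rintro ⟨a, b, c, d⟩
  simp only [Finset.mem_filter, Finset.mem_product, Equiv.coe_fn_mk]
  constructor
  · rintro ⟨⟨h1, h2, h3, h4⟩, h5⟩
    exact ⟨⟨⟨h1, h3⟩, h4, h2⟩, by omega⟩
  · rintro ⟨⟨⟨h1, h3⟩, h4, h2⟩, h5⟩
    exact ⟨⟨h1, h2, h3, h4⟩, by omega⟩

lemma card_case14 (W Z : Finset ℤ) :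
    ((W ×ˢ Z ×ˢ Z ×ˢ W).filter fun x => x.1 + x.2.1 = x.2.2.1 + x.2.2.2).card
      = cnt (· - ·) W W Z Z := by
  rw [cnt]
  apply Finset.card_equiv ⟨fun x => ((x.1, x.2.2.2), x.2.2.1, x.2.1),
    fun x => (x.1.1, x.2.2, x.2.1, x.1.2), fun ⟨a,b,c,d⟩ => rfl, fun ⟨⟨a,b⟩,c,d⟩ => rfl⟩
  rintro ⟨a, b, c, d⟩
  simp only [Finset.mem_filter, Finset.mem_product, Equiv.coe_fn_mk]
  constructor
  · rintro ⟨⟨h1, h2, h3, h4⟩, h5⟩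
    exact ⟨⟨⟨h1, h4⟩, h3, h2⟩, by omega⟩
  · rintro ⟨⟨⟨h1, h4⟩, h3, h2⟩, h5⟩
    exact ⟨⟨h1, h2, h3, h4⟩, by omega⟩

lemma card_case23 (W Z : Finset ℤ) :
    ((Z ×ˢ W ×ˢ W ×ˢ Z).filter fun x => x.1 + x.2.1 = x.2.2.1 + x.2.2.2).card
      = cnt (· - ·) W W Z Z := by
  rw [cnt]
  apply Finset.card_equiv ⟨fun x => ((x.2.1, x.2.2.1), x.2.2.2, x.1),
    fun x => (x.2.2, x.1.1, x.1.2, x.2.1), fun ⟨a,b,c,d⟩ => rfl, fun ⟨⟨a,b⟩,c,d⟩ => rfl⟩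
  rintro ⟨a, b, c, d⟩
  simp only [Finset.mem_filter, Finset.mem_product, Equiv.coe_fn_mk]
  constructor
  · rintro ⟨⟨h1, h2, h3, h4⟩, h5⟩
    exact ⟨⟨⟨h2, h3⟩, h4, h1⟩, by omega⟩
  · rintro ⟨⟨⟨h2, h3⟩, h4, h1⟩, h5⟩
    exact ⟨⟨h1, h2, h3, h4⟩, by omega⟩

lemma card_case24 (W Z : Finset ℤ) :
    ((Z ×ˢ W ×ˢ Z ×ˢ W).filter fun x => x.1 + x.2.1 = x.2.2.1 + x.2.2.2).card
      = cnt (· - ·) W W Z Z := by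
  rw [cnt]
  apply Finset.card_equiv ⟨fun x => ((x.2.1, x.2.2.2), x.2.2.1, x.1),
    fun x => (x.2.2, x.1.1, x.2.1, x.1.2), fun ⟨a,b,c,d⟩ => rfl, fun ⟨⟨a,b⟩,c,d⟩ => rfl⟩
  rintro ⟨a, b, c, d⟩
  simp only [Finset.mem_filter, Finset.mem_product, Equiv.coe_fn_mk]
  constructor
  · rintro ⟨⟨h1, h2, h3, h4⟩, h5⟩
    exact ⟨⟨⟨h2, h4⟩, h3, h1⟩, by omega⟩
  · rintro ⟨⟨⟨h2, h4⟩, h3, h1⟩, h5⟩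
    exact ⟨⟨h1, h2, h3, h4⟩, by omega⟩

lemma addEnergy_image_mul (c : ℤ) (hc : c ≠ 0) (A : Finset ℤ) :
    _root_.addEnergy (A.image (fun x => c * x)) = _root_.addEnergy A := by
  rw [_root_.addEnergy, _root_.addEnergy]
  symm
  apply Finset.card_bij (fun x _ => (c * x.1, c * x.2.1, c * x.2.2.1, c * x.2.2.2))
  · rintro ⟨a, b, d, e⟩ hx
    simp only [Finset.mem_filter, Finset.mem_product] at hx ⊢
    obtain ⟨⟨h1, h2, h3, h4⟩, h5⟩ := hx
    refine ⟨⟨Finset.mem_image_of_mem _ h1, Finset.mem_image_of_mem _ h2,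
      Finset.mem_image_of_mem _ h3, Finset.mem_image_of_mem _ h4⟩, by rw [← mul_add, ← mul_add, h5]⟩
  · rintro ⟨a, b, d, e⟩ _ ⟨a', b', d', e'⟩ _ h
    simp only [Prod.mk.injEq] at h
    obtain ⟨h1, h2, h3, h4⟩ := h
    simp [mul_left_cancel₀ hc h1, mul_left_cancel₀ hc h2, mul_left_cancel₀ hc h3,
      mul_left_cancel₀ hc h4]
  · rintro ⟨a, b, d, e⟩ hx
    simp only [Finset.mem_filter, Finset.mem_product, Finset.mem_image] at hx
    obtain ⟨⟨⟨a', ha', rfl⟩, ⟨b', hb', rfl⟩, ⟨d', hd', rfl⟩, ⟨e', he', rfl⟩⟩, h5⟩ := hx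
    refine ⟨(a', b', d', e'), ?_, rfl⟩
    simp only [Finset.mem_filter, Finset.mem_product]
    refine ⟨⟨ha', hb', hd', he'⟩, ?_⟩
    have : c * (a' + b') = c * (d' + e') := by rw [mul_add, mul_add]; exact h5
    exact mul_left_cancel₀ hc this


def cond1 (V : Finset ℤ) (q : ℤ × ℤ × ℤ × ℤ) : Prop := q.1 ∈ V ∧ q.2.1 ∈ V
def cond2 (V : Finset ℤ) (q : ℤ × ℤ × ℤ × ℤ) : Prop := q.2.2.1 ∈ V ∧ q.2.2.2 ∈ V
def cond3 (V : Finset ℤ) (q : ℤ × ℤ × ℤ × ℤ) : Prop := q.1 ∈ V ∧ q.2.2.1 ∈ V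
def cond4 (V : Finset ℤ) (q : ℤ × ℤ × ℤ × ℤ) : Prop := q.1 ∈ V ∧ q.2.2.2 ∈ V
def cond5 (V : Finset ℤ) (q : ℤ × ℤ × ℤ × ℤ) : Prop := q.2.1 ∈ V ∧ q.2.2.1 ∈ V
def cond6 (V : Finset ℤ) (q : ℤ × ℤ × ℤ × ℤ) : Prop := q.2.1 ∈ V ∧ q.2.2.2 ∈ V

instance (V : Finset ℤ) : DecidablePred (cond1 V) := fun q => instDecidableAnd
instance (V : Finset ℤ) : DecidablePred (cond2 V) := fun q => instDecidableAnd
instance (V : Finset ℤ) : DecidablePred (cond3 V) := fun q => instDecidableAnd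
instance (V : Finset ℤ) : DecidablePred (cond4 V) := fun q => instDecidableAnd
instance (V : Finset ℤ) : DecidablePred (cond5 V) := fun q => instDecidableAnd
instance (V : Finset ℤ) : DecidablePred (cond6 V) := fun q => instDecidableAnd

lemma bound1 (V Z : Finset ℤ) :
    ((((Z ×ˢ Z ×ˢ Z ×ˢ Z).filter (fun x => x.1 + x.2.1 = x.2.2.1 + x.2.2.2))).filter
      (cond1 V)).card ^ 2 ≤ _root_.addEnergy V * _root_.addEnergy Z := by
  have hsub : (((Z ×ˢ Z ×ˢ Z ×ˢ Z).filter (fun x => x.1 + x.2.1 = x.2.2.1 + x.2.2.2))).filter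
      (cond1 V) ⊆ (V ×ˢ V ×ˢ Z ×ˢ Z).filter (fun x => x.1 + x.2.1 = x.2.2.1 + x.2.2.2) := by
    intro q hq
    simp only [Finset.mem_filter, Finset.mem_product, cond1] at hq ⊢
    exact ⟨⟨hq.2.1, hq.2.2, hq.1.1.2.2.1, hq.1.1.2.2.2⟩, hq.1.2⟩
  calc _ ≤ ((V ×ˢ V ×ˢ Z ×ˢ Z).filter
        (fun x => x.1 + x.2.1 = x.2.2.1 + x.2.2.2)).card ^ 2 :=
        Nat.pow_le_pow_left (Finset.card_le_card hsub) 2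
    _ = cnt (· + ·) V V Z Z ^ 2 := by rw [card_case12]
    _ ≤ cnt (· + ·) V V V V * cnt (· + ·) Z Z Z Z := cnt_sq_le _ _ _ _ _
    _ = _root_.addEnergy V * _root_.addEnergy Z := by
        rw [← addEnergy_eq_cnt_add, ← addEnergy_eq_cnt_add]

lemma bound2 (V Z : Finset ℤ) :
    ((((Z ×ˢ Z ×ˢ Z ×ˢ Z).filter (fun x => x.1 + x.2.1 = x.2.2.1 + x.2.2.2))).filter
      (cond2 V)).card ^ 2 ≤ _root_.addEnergy V * _root_.addEnergy Z := by
  have hsub : (((Z ×ˢ Z ×ˢ Z ×ˢ Z).filter (fun x => x.1 + x.2.1 = x.2.2.1 + x.2.2.2))).filter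
      (cond2 V) ⊆ (Z ×ˢ Z ×ˢ V ×ˢ V).filter (fun x => x.1 + x.2.1 = x.2.2.1 + x.2.2.2) := by
    intro q hq
    simp only [Finset.mem_filter, Finset.mem_product, cond2] at hq ⊢
    exact ⟨⟨hq.1.1.1, hq.1.1.2.1, hq.2.1, hq.2.2⟩, hq.1.2⟩
  calc _ ≤ ((Z ×ˢ Z ×ˢ V ×ˢ V).filter
        (fun x => x.1 + x.2.1 = x.2.2.1 + x.2.2.2)).card ^ 2 :=
        Nat.pow_le_pow_left (Finset.card_le_card hsub) 2
    _ = cnt (· + ·) V V Z Z ^ 2 := by rw [card_case34]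
    _ ≤ cnt (· + ·) V V V V * cnt (· + ·) Z Z Z Z := cnt_sq_le _ _ _ _ _
    _ = _root_.addEnergy V * _root_.addEnergy Z := by
        rw [← addEnergy_eq_cnt_add, ← addEnergy_eq_cnt_add]

lemma bound3 (V Z : Finset ℤ) :
    ((((Z ×ˢ Z ×ˢ Z ×ˢ Z).filter (fun x => x.1 + x.2.1 = x.2.2.1 + x.2.2.2))).filter
      (cond3 V)).card ^ 2 ≤ _root_.addEnergy V * _root_.addEnergy Z := by
  have hsub : (((Z ×ˢ Z ×ˢ Z ×ˢ Z).filter (fun x => x.1 + x.2.1 = x.2.2.1 + x.2.2.2))).filter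
      (cond3 V) ⊆ (V ×ˢ Z ×ˢ V ×ˢ Z).filter (fun x => x.1 + x.2.1 = x.2.2.1 + x.2.2.2) := by
    intro q hq
    simp only [Finset.mem_filter, Finset.mem_product, cond3] at hq ⊢
    exact ⟨⟨hq.2.1, hq.1.1.2.1, hq.2.2, hq.1.1.2.2.2⟩, hq.1.2⟩
  calc _ ≤ ((V ×ˢ Z ×ˢ V ×ˢ Z).filter
        (fun x => x.1 + x.2.1 = x.2.2.1 + x.2.2.2)).card ^ 2 :=
        Nat.pow_le_pow_left (Finset.card_le_card hsub) 2
    _ = cnt (· - ·) V V Z Z ^ 2 := by rw [card_case13]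
    _ ≤ cnt (· - ·) V V V V * cnt (· - ·) Z Z Z Z := cnt_sq_le _ _ _ _ _
    _ = _root_.addEnergy V * _root_.addEnergy Z := by
        rw [← addEnergy_eq_cnt_sub, ← addEnergy_eq_cnt_sub]

lemma bound4 (V Z : Finset ℤ) :
    ((((Z ×ˢ Z ×ˢ Z ×ˢ Z).filter (fun x => x.1 + x.2.1 = x.2.2.1 + x.2.2.2))).filter
      (cond4 V)).card ^ 2 ≤ _root_.addEnergy V * _root_.addEnergy Z := by
  have hsub : (((Z ×ˢ Z ×ˢ Z ×ˢ Z).filter (fun x => x.1 + x.2.1 = x.2.2.1 + x.2.2.2))).filter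
      (cond4 V) ⊆ (V ×ˢ Z ×ˢ Z ×ˢ V).filter (fun x => x.1 + x.2.1 = x.2.2.1 + x.2.2.2) := by
    intro q hq
    simp only [Finset.mem_filter, Finset.mem_product, cond4] at hq ⊢
    exact ⟨⟨hq.2.1, hq.1.1.2.1, hq.1.1.2.2.1, hq.2.2⟩, hq.1.2⟩
  calc _ ≤ ((V ×ˢ Z ×ˢ Z ×ˢ V).filter
        (fun x => x.1 + x.2.1 = x.2.2.1 + x.2.2.2)).card ^ 2 :=
        Nat.pow_le_pow_left (Finset.card_le_card hsub) 2
    _ = cnt (· - ·) V V Z Z ^ 2 := by rw [card_case14]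
    _ ≤ cnt (· - ·) V V V V * cnt (· - ·) Z Z Z Z := cnt_sq_le _ _ _ _ _
    _ = _root_.addEnergy V * _root_.addEnergy Z := by
        rw [← addEnergy_eq_cnt_sub, ← addEnergy_eq_cnt_sub]

lemma bound5 (V Z : Finset ℤ) :
    ((((Z ×ˢ Z ×ˢ Z ×ˢ Z).filter (fun x => x.1 + x.2.1 = x.2.2.1 + x.2.2.2))).filter
      (cond5 V)).card ^ 2 ≤ _root_.addEnergy V * _root_.addEnergy Z := by
  have hsub : (((Z ×ˢ Z ×ˢ Z ×ˢ Z).filter (fun x => x.1 + x.2.1 = x.2.2.1 + x.2.2.2))).filter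
      (cond5 V) ⊆ (Z ×ˢ V ×ˢ V ×ˢ Z).filter (fun x => x.1 + x.2.1 = x.2.2.1 + x.2.2.2) := by
    intro q hq
    simp only [Finset.mem_filter, Finset.mem_product, cond5] at hq ⊢
    exact ⟨⟨hq.1.1.1, hq.2.1, hq.2.2, hq.1.1.2.2.2⟩, hq.1.2⟩
  calc _ ≤ ((Z ×ˢ V ×ˢ V ×ˢ Z).filter
        (fun x => x.1 + x.2.1 = x.2.2.1 + x.2.2.2)).card ^ 2 :=
        Nat.pow_le_pow_left (Finset.card_le_card hsub) 2
    _ = cnt (· - ·) V V Z Z ^ 2 := by rw [card_case23]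
    _ ≤ cnt (· - ·) V V V V * cnt (· - ·) Z Z Z Z := cnt_sq_le _ _ _ _ _
    _ = _root_.addEnergy V * _root_.addEnergy Z := by
        rw [← addEnergy_eq_cnt_sub, ← addEnergy_eq_cnt_sub]

lemma bound6 (V Z : Finset ℤ) :
    ((((Z ×ˢ Z ×ˢ Z ×ˢ Z).filter (fun x => x.1 + x.2.1 = x.2.2.1 + x.2.2.2))).filter
      (cond6 V)).card ^ 2 ≤ _root_.addEnergy V * _root_.addEnergy Z := by
  have hsub : (((Z ×ˢ Z ×ˢ Z ×ˢ Z).filter (fun x => x.1 + x.2.1 = x.2.2.1 + x.2.2.2))).filter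
      (cond6 V) ⊆ (Z ×ˢ V ×ˢ Z ×ˢ V).filter (fun x => x.1 + x.2.1 = x.2.2.1 + x.2.2.2) := by
    intro q hq
    simp only [Finset.mem_filter, Finset.mem_product, cond6] at hq ⊢
    exact ⟨⟨hq.1.1.1, hq.2.1, hq.1.1.2.2.1, hq.2.2⟩, hq.1.2⟩
  calc _ ≤ ((Z ×ˢ V ×ˢ Z ×ˢ V).filter
        (fun x => x.1 + x.2.1 = x.2.2.1 + x.2.2.2)).card ^ 2 :=
        Nat.pow_le_pow_left (Finset.card_le_card hsub) 2
    _ = cnt (· - ·) V V Z Z ^ 2 := by rw [card_case24]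
    _ ≤ cnt (· - ·) V V V V * cnt (· - ·) Z Z Z Z := cnt_sq_le _ _ _ _ _
    _ = _root_.addEnergy V * _root_.addEnergy Z := by
        rw [← addEnergy_eq_cnt_sub, ← addEnergy_eq_cnt_sub]


end OPS

lemma card_union6 {α : Type*} [DecidableEq α] (A B C D E F : Finset α) :
    (A ∪ B ∪ C ∪ D ∪ E ∪ F).card
      ≤ A.card + B.card + C.card + D.card + E.card + F.card := by
  have h1 := Finset.card_union_le A B
  have h2 := Finset.card_union_le (A ∪ B) C
  have h3 := Finset.card_union_le (A ∪ B ∪ C) D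
  have h4 := Finset.card_union_le (A ∪ B ∪ C ∪ D) E
  have h5 := Finset.card_union_le (A ∪ B ∪ C ∪ D ∪ E) F
  omega

set_option maxHeartbeats 2000000 in
open OPS in
theorem one_prime_separation (p : ℕ) (hp : p.Prime) (N : ℕ) (X : Fin N → Finset ℤ)
    (hX : ∀ i, ∀ x ∈ X i, ¬ (p : ℤ) ∣ x) (k : Fin N → ℕ) (hk : StrictMono k)
    (Y : Finset ℤ) (hY : Y = Finset.univ.biUnion (fun i => (X i).image (fun x => (p : ℤ) ^ (k i) * x))) :
    Real.sqrt (addEnergy Y) ≤ 6 * ∑ i, Real.sqrt (addEnergy (X i)) := by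
  classical
  set W : Fin N → Finset ℤ := fun i => (X i).image (fun x => (p : ℤ) ^ (k i) * x) with hW
  have hpne : (p : ℤ) ≠ 0 := by exact_mod_cast hp.ne_zero
  have hEW : ∀ i, addEnergy (W i) = addEnergy (X i) := fun i =>
    addEnergy_image_mul _ (pow_ne_zero _ hpne) _
  set Q : Finset (ℤ × ℤ × ℤ × ℤ) :=
    (Y ×ˢ Y ×ˢ Y ×ˢ Y).filter (fun x => x.1 + x.2.1 = x.2.2.1 + x.2.2.2) with hQ
  have hmemW : ∀ (y : ℤ), y ∈ Y → ∃ i, y ∈ W i := by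
    intro y hy
    rw [hY, Finset.mem_biUnion] at hy
    obtain ⟨i, _, hi⟩ := hy
    exact ⟨i, hi⟩
  have hslice : ∀ (i : Fin N) (y : ℤ), y ∈ W i → ∃ x, y = (p:ℤ) ^ (k i) * x ∧ ¬ (p:ℤ) ∣ x := by
    intro i y hy
    rw [hW] at hy
    simp only [Finset.mem_image] at hy
    obtain ⟨x, hx, rfl⟩ := hy
    exact ⟨x, rfl, hX i x hx⟩
  have hcover : ∀ q ∈ Q, ∃ i, cond1 (W i) q ∨ cond2 (W i) q ∨ cond3 (W i) q ∨ cond4 (W i) q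
      ∨ cond5 (W i) q ∨ cond6 (W i) q := by
    rintro ⟨y1, y2, y3, y4⟩ hq
    rw [hQ, Finset.mem_filter] at hq
    simp only [Finset.mem_product] at hq
    obtain ⟨⟨hy1, hy2, hy3, hy4⟩, heq⟩ := hq
    obtain ⟨i1, hi1⟩ := hmemW _ hy1
    obtain ⟨i2, hi2⟩ := hmemW _ hy2
    obtain ⟨i3, hi3⟩ := hmemW _ hy3
    obtain ⟨i4, hi4⟩ := hmemW _ hy4
    by_cases h12 : i1 = i2
    · exact ⟨i1, Or.inl ⟨hi1, h12 ▸ hi2⟩⟩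
    by_cases h34 : i3 = i4
    · exact ⟨i3, Or.inr (Or.inl ⟨hi3, h34 ▸ hi4⟩)⟩
    by_cases h13 : i1 = i3
    · exact ⟨i1, Or.inr (Or.inr (Or.inl ⟨hi1, h13 ▸ hi3⟩))⟩
    by_cases h14 : i1 = i4
    · exact ⟨i1, Or.inr (Or.inr (Or.inr (Or.inl ⟨hi1, h14 ▸ hi4⟩)))⟩
    by_cases h23 : i2 = i3
    · exact ⟨i2, Or.inr (Or.inr (Or.inr (Or.inr (Or.inl ⟨hi2, h23 ▸ hi3⟩))))⟩
    by_cases h24 : i2 = i4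
    · exact ⟨i2, Or.inr (Or.inr (Or.inr (Or.inr (Or.inr ⟨hi2, h24 ▸ hi4⟩))))⟩
    exfalso
    obtain ⟨x1, hx1, hd1⟩ := hslice _ _ hi1
    obtain ⟨x2, hx2, hd2⟩ := hslice _ _ hi2
    obtain ⟨x3, hx3, hd3⟩ := hslice _ _ hi3
    obtain ⟨x4, hx4, hd4⟩ := hslice _ _ hi4
    exact key4 hp hx1 hd1 hx2 hd2 hx3 hd3 hx4 hd4 heq
      ⟨fun h => h12 (hk.injective h), fun h => h13 (hk.injective h),
       fun h => h14 (hk.injective h), fun h => h23 (hk.injective h),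
       fun h => h24 (hk.injective h), fun h => h34 (hk.injective h)⟩
  have hsplit : addEnergy Y ≤ ∑ i : Fin N,
      ((Q.filter (cond1 (W i))).card + (Q.filter (cond2 (W i))).card
        + (Q.filter (cond3 (W i))).card + (Q.filter (cond4 (W i))).card
        + (Q.filter (cond5 (W i))).card + (Q.filter (cond6 (W i))).card) := by
    have h2 : Q ⊆ Finset.univ.biUnion (fun i =>
        Q.filter (fun q => cond1 (W i) q ∨ cond2 (W i) q ∨ cond3 (W i) q ∨ cond4 (W i) q
          ∨ cond5 (W i) q ∨ cond6 (W i) q)) := by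
      intro q hq
      obtain ⟨i, hi⟩ := hcover q hq
      exact Finset.mem_biUnion.2 ⟨i, Finset.mem_univ _, Finset.mem_filter.2 ⟨hq, hi⟩⟩
    calc addEnergy Y = Q.card := rfl
      _ ≤ (Finset.univ.biUnion (fun i =>
          Q.filter (fun q => cond1 (W i) q ∨ cond2 (W i) q ∨ cond3 (W i) q ∨ cond4 (W i) q
            ∨ cond5 (W i) q ∨ cond6 (W i) q))).card := Finset.card_le_card h2
      _ ≤ ∑ i : Fin N, (Q.filter (fun q => cond1 (W i) q ∨ cond2 (W i) q ∨ cond3 (W i) q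
            ∨ cond4 (W i) q ∨ cond5 (W i) q ∨ cond6 (W i) q)).card := Finset.card_biUnion_le
      _ ≤ _ := by
          refine Finset.sum_le_sum fun i _ => ?_
          have hsub : Q.filter (fun q => cond1 (W i) q ∨ cond2 (W i) q ∨ cond3 (W i) q
              ∨ cond4 (W i) q ∨ cond5 (W i) q ∨ cond6 (W i) q)
              ⊆ Q.filter (cond1 (W i)) ∪ Q.filter (cond2 (W i)) ∪ Q.filter (cond3 (W i))
                ∪ Q.filter (cond4 (W i)) ∪ Q.filter (cond5 (W i)) ∪ Q.filter (cond6 (W i)) := by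
            intro q hq
            rw [Finset.mem_filter] at hq
            simp only [Finset.mem_union, Finset.mem_filter]
            tauto
          exact le_trans (Finset.card_le_card hsub) (card_union6 _ _ _ _ _ _)
  -- pass to real numbers
  have hcastle : ∀ (n : ℕ) (i : Fin N), n ^ 2 ≤ addEnergy (X i) * addEnergy Y →
      (n : ℝ) ≤ Real.sqrt (addEnergy (X i)) * Real.sqrt (addEnergy Y) := by
    intro n i h
    rw [← Real.sqrt_mul_self (Nat.cast_nonneg n), ← Real.sqrt_mul (Nat.cast_nonneg _)]
    apply Real.sqrt_le_sqrt
    have : (n:ℝ) * n = ((n^2 : ℕ) : ℝ) := by push_cast; ring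
    rw [this]
    exact_mod_cast h
  have hmain : (addEnergy Y : ℝ) ≤ (6 * ∑ i, Real.sqrt (addEnergy (X i))) * Real.sqrt (addEnergy Y) := by
    calc (addEnergy Y : ℝ) ≤ ((∑ i : Fin N,
        ((Q.filter (cond1 (W i))).card + (Q.filter (cond2 (W i))).card
          + (Q.filter (cond3 (W i))).card + (Q.filter (cond4 (W i))).card
          + (Q.filter (cond5 (W i))).card + (Q.filter (cond6 (W i))).card) : ℕ) : ℝ) := by
          exact_mod_cast hsplit
      _ ≤ ∑ i : Fin N, 6 * (Real.sqrt (addEnergy (X i)) * Real.sqrt (addEnergy Y)) := by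
          push_cast
          refine Finset.sum_le_sum fun i _ => ?_
          have b1 := hcastle _ i ((hEW i) ▸ bound1 (W i) Y)
          have b2 := hcastle _ i ((hEW i) ▸ bound2 (W i) Y)
          have b3 := hcastle _ i ((hEW i) ▸ bound3 (W i) Y)
          have b4 := hcastle _ i ((hEW i) ▸ bound4 (W i) Y)
          have b5 := hcastle _ i ((hEW i) ▸ bound5 (W i) Y)
          have b6 := hcastle _ i ((hEW i) ▸ bound6 (W i) Y)
          rw [hQ]
          linarith
      _ = (6 * ∑ i, Real.sqrt (addEnergy (X i))) * Real.sqrt (addEnergy Y) := by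
          rw [Finset.sum_congr rfl (fun i _ => (mul_assoc _ _ _).symm), ← Finset.sum_mul,
            ← Finset.mul_sum]
  rcases Nat.eq_zero_or_pos (addEnergy Y) with h0 | hpos
  · rw [h0]
    simp only [Nat.cast_zero, Real.sqrt_zero]
    exact mul_nonneg (by norm_num)
      (Finset.sum_nonneg fun i _ => Real.sqrt_nonneg _)
  · have hsq : (0:ℝ) < Real.sqrt (addEnergy Y) := Real.sqrt_pos.2 (by exact_mod_cast hpos)
    have : Real.sqrt (addEnergy Y) * Real.sqrt (addEnergy Y)
        ≤ (6 * ∑ i, Real.sqrt (addEnergy (X i))) * Real.sqrt (addEnergy Y) := by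
      rw [Real.mul_self_sqrt (Nat.cast_nonneg _)]
      exact hmain
    exact le_of_mul_le_mul_right this hsq
end

section
/- (Energy cover lemma.) Let A, A_1, …, A_L be finite sets of integers such that A ⊆ ⋃_{i=1}^L A_i, and suppose every element a ∈ A belongs to at least M of the sets A_i. Then E_+(A) ≤ M^{−4} · (Σ_{i=1}^L E_+(A_i)^{1/4})^4. -/
section QuadCount
open Finset

/-- Number of quadruples (a,b,c,d) ∈ A×B×C×D with a+b=c+d. -/
def Q (A B C D : Finset ℤ) : ℕ :=
  ((A ×ˢ B ×ˢ C ×ˢ D).filter (fun x => x.1 + x.2.1 = x.2.2.1 + x.2.2.2)).card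

/-- Representation function for sums. -/
def rr (A B : Finset ℤ) (x : ℤ) : ℕ := ((A ×ˢ B).filter fun p => p.1 + p.2 = x).card

/-- Representation function for differences. -/
def cc (A B : Finset ℤ) (y : ℤ) : ℕ := ((A ×ˢ B).filter fun p => p.1 - p.2 = y).card

lemma fiber_r (A B C D : Finset ℤ) (x : ℤ) :
    ((A ×ˢ B ×ˢ C ×ˢ D).filter
      (fun q => (q.1 + q.2.1 = q.2.2.1 + q.2.2.2) ∧ q.1 + q.2.1 = x)).card
      = rr A B x * rr C D x := by
  rw [rr, rr, ← Finset.card_product]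
  apply Finset.card_bij (fun q _ => ((q.1, q.2.1), (q.2.2.1, q.2.2.2)))
  · rintro ⟨a, b, c, d⟩ hq
    simp only [mem_filter, mem_product] at hq ⊢
    refine ⟨⟨⟨hq.1.1, hq.1.2.1⟩, hq.2.2⟩, ⟨hq.1.2.2.1, hq.1.2.2.2⟩, ?_⟩
    omega
  · rintro ⟨a, b, c, d⟩ _ ⟨a', b', c', d'⟩ _ h
    simp only [Prod.ext_iff] at h
    simp only [Prod.ext_iff]
    tauto
  · rintro ⟨⟨a, b⟩, ⟨c, d⟩⟩ hp
    simp only [mem_product, mem_filter] at hp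
    refine ⟨(a, b, c, d), ?_, rfl⟩
    simp only [mem_filter, mem_product]
    refine ⟨⟨hp.1.1.1, hp.1.1.2, hp.2.1.1, hp.2.1.2⟩, ?_, ?_⟩ <;> omega

lemma fiber_c (A B C D : Finset ℤ) (y : ℤ) :
    ((A ×ˢ B ×ˢ C ×ˢ D).filter
      (fun q => (q.1 + q.2.1 = q.2.2.1 + q.2.2.2) ∧ q.1 - q.2.2.1 = y)).card
      = cc A C y * cc D B y := by
  rw [cc, cc, ← Finset.card_product]
  apply Finset.card_bij (fun q _ => ((q.1, q.2.2.1), (q.2.2.2, q.2.1)))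
  · rintro ⟨a, b, c, d⟩ hq
    simp only [mem_filter, mem_product] at hq ⊢
    refine ⟨⟨⟨hq.1.1, hq.1.2.2.1⟩, hq.2.2⟩, ⟨hq.1.2.2.2, hq.1.2.1⟩, ?_⟩
    omega
  · rintro ⟨a, b, c, d⟩ _ ⟨a', b', c', d'⟩ _ h
    simp only [Prod.ext_iff] at h
    simp only [Prod.ext_iff]
    tauto
  · rintro ⟨⟨a, c⟩, ⟨d, b⟩⟩ hp
    simp only [mem_product, mem_filter] at hp
    refine ⟨(a, b, c, d), ?_, rfl⟩
    simp only [mem_filter, mem_product]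
    refine ⟨⟨hp.1.1.1, hp.2.1.2, hp.1.1.2, hp.2.1.1⟩, ?_, ?_⟩ <;> omega

lemma Q_eq_r (A B C D : Finset ℤ) (S : Finset ℤ)
    (hS : ∀ a ∈ A, ∀ b ∈ B, a + b ∈ S) :
    Q A B C D = ∑ x ∈ S, rr A B x * rr C D x := by
  rw [Q, Finset.card_eq_sum_card_fiberwise (f := fun q => q.1 + q.2.1) (t := S)]
  · refine Finset.sum_congr rfl fun x _ => ?_
    rw [Finset.filter_filter, fiber_r]
  · rintro ⟨a, b, c, d⟩ hq
    simp only [mem_coe, mem_filter, mem_product] at hq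
    exact hS a hq.1.1 b hq.1.2.1

lemma Q_eq_c (A B C D : Finset ℤ) (T : Finset ℤ)
    (hT : ∀ a ∈ A, ∀ c ∈ C, a - c ∈ T) :
    Q A B C D = ∑ y ∈ T, cc A C y * cc D B y := by
  rw [Q, Finset.card_eq_sum_card_fiberwise (f := fun q => q.1 - q.2.2.1) (t := T)]
  · refine Finset.sum_congr rfl fun y _ => ?_
    rw [Finset.filter_filter, fiber_c]
  · rintro ⟨a, b, c, d⟩ hq
    simp only [mem_coe, mem_filter, mem_product] at hq
    exact hT a hq.1.1 c hq.1.2.2.1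

lemma sqrt_Q_comm (A B : Finset ℤ) :
    (Q A B A B : ℝ) ≤ Real.sqrt (Q A A A A) * Real.sqrt (Q B B B B) := by
  set T := ((A ×ˢ A).image fun p => p.1 - p.2) ∪ ((B ×ˢ B).image fun p => p.1 - p.2) with hT
  have hTA : ∀ a ∈ A, ∀ c ∈ A, a - c ∈ T := fun a ha c hc =>
    Finset.mem_union_left _ (Finset.mem_image.2 ⟨(a, c), Finset.mem_product.2 ⟨ha, hc⟩, rfl⟩)
  have hTB : ∀ a ∈ B, ∀ c ∈ B, a - c ∈ T := fun a ha c hc =>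
    Finset.mem_union_right _ (Finset.mem_image.2 ⟨(a, c), Finset.mem_product.2 ⟨ha, hc⟩, rfl⟩)
  have h1 : (Q A B A B : ℝ) = ∑ y ∈ T, (cc A A y : ℝ) * (cc B B y : ℝ) := by
    rw [Q_eq_c A B A B T hTA]; push_cast; rfl
  have h2 : (Q A A A A : ℝ) = ∑ y ∈ T, (cc A A y : ℝ) ^ 2 := by
    rw [Q_eq_c A A A A T hTA]; push_cast [sq]; rfl
  have h3 : (Q B B B B : ℝ) = ∑ y ∈ T, (cc B B y : ℝ) ^ 2 := by
    rw [Q_eq_c B B B B T hTB]; push_cast [sq]; rfl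
  rw [h1, h2, h3]
  exact Real.sum_mul_le_sqrt_mul_sqrt _ _ _

lemma Q_le_sqrt (A B C D : Finset ℤ) :
    (Q A B C D : ℝ) ≤ Real.sqrt (Q A B A B) * Real.sqrt (Q C D C D) := by
  set S := ((A ×ˢ B).image fun p => p.1 + p.2) ∪ ((C ×ˢ D).image fun p => p.1 + p.2) with hS
  have hSA : ∀ a ∈ A, ∀ b ∈ B, a + b ∈ S := fun a ha b hb =>
    Finset.mem_union_left _ (Finset.mem_image.2 ⟨(a, b), Finset.mem_product.2 ⟨ha, hb⟩, rfl⟩)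
  have hSC : ∀ a ∈ C, ∀ b ∈ D, a + b ∈ S := fun a ha b hb =>
    Finset.mem_union_right _ (Finset.mem_image.2 ⟨(a, b), Finset.mem_product.2 ⟨ha, hb⟩, rfl⟩)
  have h1 : (Q A B C D : ℝ) = ∑ x ∈ S, (rr A B x : ℝ) * (rr C D x : ℝ) := by
    rw [Q_eq_r A B C D S hSA]; push_cast; rfl
  have h2 : (Q A B A B : ℝ) = ∑ x ∈ S, (rr A B x : ℝ) ^ 2 := by
    rw [Q_eq_r A B A B S hSA]; push_cast [sq]; rfl
  have h3 : (Q C D C D : ℝ) = ∑ x ∈ S, (rr C D x : ℝ) ^ 2 := by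
    rw [Q_eq_r C D C D S hSC]; push_cast [sq]; rfl
  rw [h1, h2, h3]
  exact Real.sum_mul_le_sqrt_mul_sqrt _ _ _

lemma Q_le_rpow (A B C D : Finset ℤ) :
    (Q A B C D : ℝ) ≤ (Q A A A A : ℝ) ^ ((1:ℝ)/4) * (Q B B B B : ℝ) ^ ((1:ℝ)/4) *
      (Q C C C C : ℝ) ^ ((1:ℝ)/4) * (Q D D D D : ℝ) ^ ((1:ℝ)/4) := by
  have e4 : ∀ X : Finset ℤ, Real.sqrt (Real.sqrt (Q X X X X)) = (Q X X X X : ℝ) ^ ((1:ℝ)/4) := by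
    intro X
    rw [Real.sqrt_eq_rpow, Real.sqrt_eq_rpow, ← Real.rpow_mul (by positivity)]
    norm_num
  calc (Q A B C D : ℝ) ≤ Real.sqrt (Q A B A B) * Real.sqrt (Q C D C D) := Q_le_sqrt A B C D
    _ ≤ Real.sqrt (Real.sqrt (Q A A A A) * Real.sqrt (Q B B B B)) *
        Real.sqrt (Real.sqrt (Q C C C C) * Real.sqrt (Q D D D D)) := by
        gcongr <;> [exact sqrt_Q_comm A B; exact sqrt_Q_comm C D]
    _ = _ := by
        rw [Real.sqrt_mul (Real.sqrt_nonneg _), Real.sqrt_mul (Real.sqrt_nonneg _),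
          e4 A, e4 B, e4 C, e4 D]
        ring

end QuadCount

lemma addEnergy_eq_Q (A : Finset ℤ) : addEnergy A = Q A A A A := rfl

lemma count_lemma (L : ℕ) (A : Finset ℤ) (Ai : Fin L → Finset ℤ)
    (hcover : A ⊆ Finset.univ.biUnion Ai) (M : ℕ)
    (hdeg : ∀ a ∈ A, M ≤ (Finset.univ.filter (fun i => a ∈ Ai i)).card) :
    addEnergy A * M ^ 4 ≤
      ∑ p : Fin L × Fin L × Fin L × Fin L,
        Q (Ai p.1) (Ai p.2.1) (Ai p.2.2.1) (Ai p.2.2.2) := by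
  classical
  set T := (A ×ˢ A ×ˢ A ×ˢ A).filter (fun x => x.1 + x.2.1 = x.2.2.1 + x.2.2.2) with hTdef
  have step1 : ∀ q ∈ T, M ^ 4 ≤ ∑ p : Fin L × Fin L × Fin L × Fin L,
      (if q.1 ∈ Ai p.1 ∧ q.2.1 ∈ Ai p.2.1 ∧ q.2.2.1 ∈ Ai p.2.2.1 ∧ q.2.2.2 ∈ Ai p.2.2.2
        then 1 else 0) := by
    rintro ⟨a, b, c, d⟩ hq
    simp only [hTdef, Finset.mem_filter, Finset.mem_product] at hq
    rw [← Finset.card_filter]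
    have hset : (Finset.univ : Finset (Fin L × Fin L × Fin L × Fin L)).filter
        (fun p => a ∈ Ai p.1 ∧ b ∈ Ai p.2.1 ∧ c ∈ Ai p.2.2.1 ∧ d ∈ Ai p.2.2.2)
        = (Finset.univ.filter fun i => a ∈ Ai i) ×ˢ (Finset.univ.filter fun i => b ∈ Ai i)
          ×ˢ (Finset.univ.filter fun i => c ∈ Ai i) ×ˢ (Finset.univ.filter fun i => d ∈ Ai i) := by
      ext p
      simp only [Finset.mem_filter, Finset.mem_product, Finset.mem_univ, true_and]
    rw [hset, Finset.card_product, Finset.card_product, Finset.card_product]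
    have h1 := hdeg a hq.1.1
    have h2 := hdeg b hq.1.2.1
    have h3 := hdeg c hq.1.2.2.1
    have h4 := hdeg d hq.1.2.2.2
    calc M ^ 4 = M * (M * (M * M)) := by ring
      _ ≤ _ := Nat.mul_le_mul h1 (Nat.mul_le_mul h2 (Nat.mul_le_mul h3 h4))
  calc addEnergy A * M ^ 4 = ∑ q ∈ T, M ^ 4 := by
        rw [Finset.sum_const, smul_eq_mul, addEnergy_eq_Q]; rfl
    _ ≤ ∑ q ∈ T, ∑ p : Fin L × Fin L × Fin L × Fin L,
        (if q.1 ∈ Ai p.1 ∧ q.2.1 ∈ Ai p.2.1 ∧ q.2.2.1 ∈ Ai p.2.2.1 ∧ q.2.2.2 ∈ Ai p.2.2.2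
          then 1 else 0) := Finset.sum_le_sum step1
    _ = ∑ p : Fin L × Fin L × Fin L × Fin L, ∑ q ∈ T,
        (if q.1 ∈ Ai p.1 ∧ q.2.1 ∈ Ai p.2.1 ∧ q.2.2.1 ∈ Ai p.2.2.1 ∧ q.2.2.2 ∈ Ai p.2.2.2
          then 1 else 0) := Finset.sum_comm
    _ ≤ _ := by
        refine Finset.sum_le_sum fun p _ => ?_
        rw [← Finset.card_filter]
        apply Finset.card_le_card
        rintro ⟨a, b, c, d⟩ hq
        simp only [hTdef, Finset.mem_filter, Finset.mem_product] at hq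
        simp only [Q, Finset.mem_filter, Finset.mem_product]
        exact ⟨⟨hq.2.1, hq.2.2.1, hq.2.2.2.1, hq.2.2.2.2⟩, hq.1.2⟩

/-- Energy cover lemma: if `A` is covered by the sets `Aᵢ`, each point at least `M` times, then
`E₊(A) ≤ M⁻⁴ (∑ᵢ E₊(Aᵢ)^{1/4})⁴`. -/
theorem energy_cover (L : ℕ) (A : Finset ℤ) (Ai : Fin L → Finset ℤ)
    (hcover : A ⊆ Finset.univ.biUnion Ai) (M : ℕ) (hM : 0 < M)
    (hdeg : ∀ a ∈ A, M ≤ (Finset.univ.filter (fun i => a ∈ Ai i)).card) :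
    (addEnergy A : ℝ) ≤
      (∑ i, (addEnergy (Ai i) : ℝ) ^ ((1 : ℝ) / 4)) ^ 4 / (M : ℝ) ^ 4 := by
  have hMpos : (0:ℝ) < (M:ℝ) ^ 4 := by positivity
  rw [le_div_iff₀ hMpos]
  set e : Fin L → ℝ := fun i => (addEnergy (Ai i) : ℝ) ^ ((1:ℝ)/4) with he
  calc (addEnergy A : ℝ) * (M:ℝ) ^ 4
      = ((addEnergy A * M ^ 4 : ℕ) : ℝ) := by push_cast; ring
    _ ≤ ((∑ p : Fin L × Fin L × Fin L × Fin L,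
          Q (Ai p.1) (Ai p.2.1) (Ai p.2.2.1) (Ai p.2.2.2) : ℕ) : ℝ) := by
        exact_mod_cast count_lemma L A Ai hcover M hdeg
    _ = ∑ p : Fin L × Fin L × Fin L × Fin L,
          (Q (Ai p.1) (Ai p.2.1) (Ai p.2.2.1) (Ai p.2.2.2) : ℝ) := by push_cast; rfl
    _ ≤ ∑ p : Fin L × Fin L × Fin L × Fin L, e p.1 * e p.2.1 * e p.2.2.1 * e p.2.2.2 := by
        refine Finset.sum_le_sum fun p _ => ?_
        simp only [he, addEnergy_eq_Q]
        exact Q_le_rpow (Ai p.1) (Ai p.2.1) (Ai p.2.2.1) (Ai p.2.2.2)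
    _ = (∑ i, e i) ^ 4 := by
        simp only [Fintype.sum_prod_type]
        simp only [← Finset.sum_mul, ← Finset.mul_sum]
        ring
end
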